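/- Let τ be an imaginary quadratic number in the standard fundamental domain 𝓕 of SL₂(ℤ) acting on ℍ, satisfying bτ² + (a-d)τ - c = 0 with a, b, c, d ∈ ℤ, b > 0, gcd(b, a-d, c) = 1, and let Δ = (a-d)² + 4bc < 0 (the discriminant of the quadratic). Then the absolute logarithmic Weil height of τ satisfies h(τ) ≤ (1/2) log|Δ|. -/

import Mathlib

open Polynomial

/-- The primitive integral minimal polynomial of an algebraic number. -/
noncomputable def intMinPoly (a : ℂ) : Polynomial ℤ :=
  (IsLocalization.integerNormalization (nonZeroDivisors ℤ) (minpoly ℚ a)).primPart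

/-- The absolute logarithmic Weil height of an algebraic number, via the
Mahler measure of its primitive integral minimal polynomial. -/
noncomputable def logHeight (a : ℂ) : ℝ :=
  (Real.log |((intMinPoly a).leadingCoeff : ℝ)| +
    (((intMinPoly a).aroots ℂ).map (fun z => Real.log (max 1 ‖z‖))).sum) /
    (minpoly ℚ a).natDegree

lemma intMinPoly_assoc (τ : ℂ) (hint : IsIntegral ℚ τ) (p : Polynomial ℤ)
    (hprim : p.IsPrimitive) (hdeg : p.natDegree = (minpoly ℚ τ).natDegree)
    (hroot : Polynomial.aeval τ p = 0) (hp0 : p ≠ 0) :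
    Associated p (intMinPoly τ) := by
  set q := minpoly ℚ τ with hq
  have hq0 : q ≠ 0 := minpoly.ne_zero hint
  set pQ := p.map (Int.castRingHom ℚ) with hpQ
  have hpQ0 : pQ ≠ 0 := by
    simpa [hpQ, Polynomial.map_eq_zero_iff (f := Int.castRingHom ℚ) Int.cast_injective] using hp0
  have hdvd : q ∣ pQ := by
    apply minpoly.dvd
    show Polynomial.aeval τ (p.map (algebraMap ℤ ℚ)) = 0
    rwa [aeval_map_algebraMap]
  -- pQ = C s * q with s ≠ 0
  obtain ⟨r, hr⟩ := hdvd
  have hdegpQ : pQ.natDegree = q.natDegree := by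
    rw [hpQ, Polynomial.natDegree_map_eq_of_injective Int.cast_injective, hdeg]
  have hr0 : r ≠ 0 := by rintro rfl; simp at hr; exact hpQ0 hr
  have hrdeg : r.natDegree = 0 := by
    have := Polynomial.natDegree_mul hq0 hr0
    rw [← hr, hdegpQ] at this
    omega
  have hrC : r = C (r.coeff 0) := Polynomial.eq_C_of_natDegree_eq_zero hrdeg
  have hs0 : r.coeff 0 ≠ 0 := by
    intro h; rw [h] at hrC; simp at hrC; exact hr0 hrC
  -- mQ = C t * q with t ≠ 0
  set n := IsLocalization.integerNormalization (nonZeroDivisors ℤ) q with hn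
  have hn0 : n ≠ 0 := by
    rw [hn, Ne, IsFractionRing.integerNormalization_eq_zero_iff]; exact hq0
  obtain ⟨⟨u, hu⟩, hmap⟩ := IsLocalization.integerNormalization_map_to_map (nonZeroDivisors ℤ) q
  set m := intMinPoly τ with hm
  have hcontent0 : (n.content : ℚ) ≠ 0 := by
    simp [Polynomial.content_eq_zero_iff, hn0]
  have hu0 : (u : ℚ) ≠ 0 := by
    have := mem_nonZeroDivisors_iff_ne_zero.mp hu
    exact_mod_cast this
  have hmQ : m.map (Int.castRingHom ℚ) = C ((u : ℚ) / (n.content : ℚ)) * q := by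
    have h1 : n.map (Int.castRingHom ℚ) = C (u : ℚ) * q := by
      rw [show (Int.castRingHom ℚ) = algebraMap ℤ ℚ from rfl, hmap]
      simp [Polynomial.smul_eq_C_mul]
    have h2 : n = C n.content * m := n.eq_C_content_mul_primPart
    rw [h2] at h1
    simp only [Polynomial.map_mul, Polynomial.map_C] at h1
    have : C ((n.content : ℚ))⁻¹ * (C ((n.content : ℚ)) * m.map (Int.castRingHom ℚ)) =
        C ((n.content : ℚ))⁻¹ * (C (u : ℚ) * q) := by
      rw [show ((Int.castRingHom ℚ) n.content : ℚ) = (n.content : ℚ) from rfl] at h1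
      rw [h1]
    rw [← mul_assoc, ← mul_assoc, ← C_mul, ← C_mul, inv_mul_cancel₀ hcontent0, C_1,
      one_mul] at this
    rw [this, div_eq_inv_mul]
  have hmprim : m.IsPrimitive := Polynomial.isPrimitive_primPart n
  -- mutual divisibility over ℚ
  have hkey : ∀ (s t : ℚ), s ≠ 0 → C t * q = C s * q * C (t / s) := by
    intro s t hs
    rw [mul_right_comm, ← C_mul]
    congr 2
    field_simp
  have hpQeq : pQ = C (r.coeff 0) * q := by
    rw [hr]
    conv_lhs => rw [hrC]
    ring
  have ht0 : (u : ℚ) / (n.content : ℚ) ≠ 0 := div_ne_zero hu0 hcontent0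
  have d1 : p ∣ m := by
    rw [Polynomial.IsPrimitive.Int.dvd_iff_map_cast_dvd_map_cast p m hprim]
    rw [hmQ, ← hpQ, hpQeq]
    exact ⟨C (((u : ℚ) / (n.content : ℚ)) / (r.coeff 0)), hkey _ _ hs0⟩
  have d2 : m ∣ p := by
    rw [Polynomial.IsPrimitive.Int.dvd_iff_map_cast_dvd_map_cast m p hmprim]
    rw [hmQ, ← hpQ, hpQeq]
    exact ⟨C ((r.coeff 0) / ((u : ℚ) / (n.content : ℚ))), hkey _ _ ht0⟩
  exact associated_of_dvd_dvd d1 d2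

theorem stmt3 (τ : ℂ) (him : 0 < τ.im) (hre : τ.re ∈ Set.Ioc (-(1/2) : ℝ) (1/2))
    (habs : 1 ≤ ‖τ‖) (hbd : ‖τ‖ = 1 → 0 ≤ τ.re)
    (hdeg : (minpoly ℚ τ).natDegree = 2)
    (a b c d : ℤ) (hb : 0 < b)
    (hgcd : Int.gcd (Int.gcd b (a - d)) c = 1)
    (heq : (b : ℂ) * τ ^ 2 + ((a : ℂ) - (d : ℂ)) * τ - (c : ℂ) = 0)
    (Δ : ℤ) (hΔdef : Δ = (a - d) ^ 2 + 4 * b * c) (hΔ : Δ < 0) :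
    logHeight τ ≤ (1 / 2) * Real.log (|Δ| : ℝ) := by
  have hint : IsIntegral ℚ τ := by
    by_contra h
    rw [minpoly.eq_zero h] at hdeg
    simp at hdeg
  set p : Polynomial ℤ := C b * X ^ 2 + C (a - d) * X - C c with hp
  have hb0 : b ≠ 0 := hb.ne'
  have hpdeg : p.natDegree = 2 := by
    rw [hp]
    compute_degree!
  have hp0 : p ≠ 0 := fun h => by simp [h] at hpdeg
  have hbposR : (0 : ℝ) < (b : ℝ) := by exact_mod_cast hb
  have hlc : p.leadingCoeff = b := by
    rw [Polynomial.leadingCoeff, hpdeg, hp]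
    simp only [coeff_sub, coeff_add, coeff_C_mul, coeff_X_pow, coeff_C, coeff_X]
    norm_num
  have hproot : Polynomial.aeval τ p = 0 := by
    simp only [hp, map_add, map_sub, map_mul, map_pow, aeval_C, aeval_X]
    simp only [algebraMap_int_eq, eq_intCast]
    push_cast
    linear_combination heq
  have hprim : p.IsPrimitive := by
    intro k hk
    rw [Polynomial.C_dvd_iff_dvd_coeff] at hk
    have h0 := hk 0
    have h1 := hk 1
    have h2 := hk 2
    simp only [hp, coeff_sub, coeff_add, coeff_C_mul, coeff_X_pow, coeff_X, coeff_C] at h0 h1 h2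
    norm_num at h0 h1 h2
    have : k ∣ ((Int.gcd (Int.gcd b (a - d)) c : ℤ)) :=
      Int.dvd_coe_gcd (Int.dvd_coe_gcd h2 h1) h0
    rw [hgcd] at this
    exact isUnit_of_dvd_one (by exact_mod_cast this)
  have hassoc : Associated p (intMinPoly τ) :=
    intMinPoly_assoc τ hint p hprim (by rw [hpdeg, hdeg]) hproot hp0
  obtain ⟨w, hw⟩ := hassoc
  obtain ⟨r, hrunit, hrC⟩ := Polynomial.isUnit_iff.mp w.isUnit
  have hm : intMinPoly τ = p * C r := by rw [← hw, ← hrC]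
  -- complex arithmetic
  have hτne : (starRingEnd ℂ) τ ≠ τ := by
    rw [Ne, Complex.conj_eq_iff_im]
    exact him.ne'
  have heq2 : (b : ℂ) * ((starRingEnd ℂ) τ) ^ 2 + ((a : ℂ) - (d : ℂ)) * ((starRingEnd ℂ) τ)
      - (c : ℂ) = 0 := by
    have := congrArg (starRingEnd ℂ) heq
    simpa using this
  have hsub : (τ - (starRingEnd ℂ) τ) * ((b : ℂ) * (τ + (starRingEnd ℂ) τ)
      + ((a : ℂ) - (d : ℂ))) = 0 := by linear_combination heq - heq2
  have hsum : (b : ℂ) * (τ + (starRingEnd ℂ) τ) = -((a : ℂ) - (d : ℂ)) := by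
    rcases mul_eq_zero.mp hsub with h | h
    · exact absurd (sub_eq_zero.mp h).symm hτne
    · linear_combination h
  have hprod : (b : ℂ) * (τ * (starRingEnd ℂ) τ) = -(c : ℂ) := by
    linear_combination τ * hsum - heq
  -- real consequences
  have hnormsq : τ * (starRingEnd ℂ) τ = ((‖τ‖ ^ 2 : ℝ) : ℂ) := by
    rw [Complex.mul_conj]
    norm_cast
    rw [Complex.normSq_eq_norm_sq]
  have hbnorm : (b : ℝ) * ‖τ‖ ^ 2 = -(c : ℝ) := by
    have h := hprod
    rw [hnormsq] at h
    exact_mod_cast h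
  have hresum : (b : ℝ) * (2 * τ.re) = -((a : ℝ) - (d : ℝ)) := by
    have h := hsum
    rw [Complex.add_conj] at h
    exact_mod_cast h
  have hnorm1 : (1 : ℝ) ≤ ‖τ‖ ^ 2 := one_le_pow₀ habs
  have hcneg : (c : ℝ) ≤ -(b : ℝ) := by nlinarith
  have hcnegZ : c ≤ -b := by exact_mod_cast hcneg
  have hadsq : ((a - d) ^ 2 : ℤ) ≤ b ^ 2 := by
    have hre2 : τ.re ^ 2 ≤ (1 / 2 : ℝ) ^ 2 := by
      obtain ⟨h1, h2⟩ := hre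
      nlinarith
    have : (((a - d) ^ 2 : ℤ) : ℝ) ≤ ((b ^ 2 : ℤ) : ℝ) := by
      push_cast
      rw [show ((a : ℝ) - (d : ℝ)) = -((b : ℝ) * (2 * τ.re)) from by linarith]
      nlinarith [hre2, sq_nonneg ((b : ℝ))]
    exact_mod_cast this
  have hcΔ : -c ≤ -Δ := by nlinarith
  have hcpos : 0 < -c := by omega
  -- factorization over ℂ
  have hfact : (C ((b : ℤ) : ℂ) * X ^ 2 + C (((a - d : ℤ)) : ℂ) * X - C ((c : ℤ) : ℂ) : Polynomial ℂ)
      = C (b : ℂ) * ((X - C τ) * (X - C ((starRingEnd ℂ) τ))) := by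
    have e1 : (((a - d : ℤ)) : ℂ) = -((b : ℂ) * (τ + (starRingEnd ℂ) τ)) := by
      push_cast
      linear_combination hsum
    have e2 : (((c : ℤ)) : ℂ) = -((b : ℂ) * (τ * (starRingEnd ℂ) τ)) := by
      push_cast
      linear_combination hprod
    rw [e1, e2]
    simp only [C_neg, C_mul, C_add]
    ring
  have hmapp : p.map (Int.castRingHom ℂ)
      = C ((b : ℤ) : ℂ) * X ^ 2 + C (((a - d : ℤ)) : ℂ) * X - C ((c : ℤ) : ℂ) := by
    simp [hp]
  have hrne : (r : ℂ) ≠ 0 := by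
    rcases Int.isUnit_iff.mp hrunit with h | h <;> simp [h]
  have hbne : ((b : ℤ) : ℂ) ≠ 0 := by exact_mod_cast hb0
  have hroots : (intMinPoly τ).aroots ℂ = {τ, (starRingEnd ℂ) τ} := by
    rw [aroots_def, hm, Polynomial.map_mul, Polynomial.map_C]
    simp only [algebraMap_int_eq, eq_intCast]
    rw [mul_comm, Polynomial.roots_C_mul _ hrne, hmapp, hfact,
      Polynomial.roots_C_mul _ hbne, Polynomial.roots_mul (by
        apply mul_ne_zero <;> exact X_sub_C_ne_zero _),
      Polynomial.roots_X_sub_C, Polynomial.roots_X_sub_C]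
    rfl
  have hlcm : |(((intMinPoly τ).leadingCoeff : ℤ) : ℝ)| = (b : ℝ) := by
    rw [hm, Polynomial.leadingCoeff_mul, Polynomial.leadingCoeff_C, hlc]
    rcases Int.isUnit_iff.mp hrunit with h | h <;> rw [h] <;> push_cast <;>
      simp [abs_mul, abs_of_pos hbposR]
  -- put it together
  unfold logHeight
  rw [hdeg, hroots, hlcm]
  have hnc : ‖(starRingEnd ℂ) τ‖ = ‖τ‖ := by
    simp
  have hmax : max 1 ‖τ‖ = ‖τ‖ := max_eq_right habs
  simp only [Multiset.insert_eq_cons, Multiset.map_cons, Multiset.map_singleton,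
    Multiset.sum_cons, Multiset.sum_singleton, hnc, hmax]
  have hτpos : (0 : ℝ) < ‖τ‖ := lt_of_lt_of_le one_pos habs
  have hbpos : (0 : ℝ) < (b : ℝ) := Int.cast_pos.mpr hb
  have hlog1 : Real.log ((b : ℝ)) + (Real.log ‖τ‖ + Real.log ‖τ‖) = Real.log (-(c : ℝ)) := by
    rw [← hbnorm, Real.log_mul hbpos.ne' (by positivity), sq,
      Real.log_mul hτpos.ne' hτpos.ne']
  have hlog2 : Real.log (-(c : ℝ)) ≤ Real.log ((|Δ| : ℤ) : ℝ) := by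
    apply Real.log_le_log (by exact_mod_cast hcpos)
    have : -c ≤ |Δ| := by rw [abs_of_neg hΔ]; exact hcΔ
    exact_mod_cast this
  push_cast
  push_cast at hlog1 hlog2
  linarith
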